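/- Assume G(−v) = −G(v) and G(v)·v ≥ G*|v|^{2α} for all v ∈ ℝ^d with constants G* > 0 and α ∈ [1,3/2), Φ(|x|) ≥ Φ* > 0 and |F(|x|²)x| ≤ F* for all x ∈ ℝ^d, with F* < 2^{α−1/2} Φ* G*; set C* = 2^α Φ* G* − √2 F* > 0. Let (f_t)_{t∈[0,T)} be a weak solution of the kinetic flocking equation with compactly supported measures, and let 𝒱₀ = ∫ v f₀(dx,dv). Then for every t ∈ [0,T): 𝒢[f_t] = ∫ |v − 𝒱₀|² f_t(dx,dv), the map t ↦ 𝒢[f_t] is differentiable, and (d/dt) 𝒢[f_t] ≤ −C* 𝒢[f_t]^α. -/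

import Mathlib

open MeasureTheory Filter
open scoped RealInnerProductSpace BigOperators ENNReal

noncomputable section

abbrev Euc (d : ℕ) := EuclideanSpace ℝ (Fin d)

abbrev Phase (d : ℕ) := Euc d × Euc d

/-- Euclidean norm on the phase space ℝ^d × ℝ^d ≅ ℝ^{2d}. -/
noncomputable def pnorm {d : ℕ} (z : Phase d) : ℝ :=
  Real.sqrt (‖z.1‖ ^ 2 + ‖z.2‖ ^ 2)

/-- Closed ball of radius `R` (Euclidean norm) in the phase space ℝ^{2d}. -/
def pball (d : ℕ) (R : ℝ) : Set (Phase d) := {z | pnorm z ≤ R}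

/-- Velocity fluctuation 𝒢[f]. -/
noncomputable def velFluc {d : ℕ} (f : Measure (Phase d)) : ℝ :=
  (∫ z, ‖z.2‖ ^ 2 ∂f) - ‖∫ z, z.2 ∂f‖ ^ 2

/-- Position fluctuation Γ[f]. -/
noncomputable def posFluc {d : ℕ} (f : Measure (Phase d)) : ℝ :=
  (∫ z, ‖z.1‖ ^ 2 ∂f) - ‖∫ z, z.1 ∂f‖ ^ 2

/-- Interaction field H_[f]. -/
noncomputable def Hfield {d : ℕ} (Φ : ℝ → ℝ) (G : Euc d → Euc d) (F : ℝ → ℝ) (α : ℝ)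
    (f : Measure (Phase d)) (x v : Euc d) : Euc d :=
  - (∫ z, Φ ‖x - z.1‖ • G (v - z.2) ∂f)
    + velFluc f ^ ((2 * α - 1) / 2) • ∫ z, F (‖x - z.1‖ ^ 2) • (x - z.1) ∂f

/-- A family of compactly supported Borel probability measures is a weak solution of the
kinetic flocking equation on the time set `I` if for every `C¹` test function `φ` the map
`t ↦ ∫ φ d f_t` is differentiable (within `I`) with the stated derivative. -/
def IsWeakSolution {d : ℕ} (Φ : ℝ → ℝ) (G : Euc d → Euc d) (F : ℝ → ℝ) (α : ℝ)
    (I : Set ℝ) (f : ℝ → Measure (Phase d)) : Prop :=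
  (∀ t ∈ I, IsProbabilityMeasure (f t) ∧ ∃ K : Set (Phase d), IsCompact K ∧ f t Kᶜ = 0) ∧
  ∀ φ : Phase d → ℝ, ContDiff ℝ 1 φ → ∀ t ∈ I,
    HasDerivWithinAt (fun s => ∫ z, φ z ∂(f s))
      (∫ z, fderiv ℝ φ z (z.2, Hfield Φ G F α (f t) z.1 z.2) ∂(f t)) I t

/-- Measure-valued solution of the kinetic flocking equation on a time set `I ∋ 0`,
given by a family of compactly supported probability measures together with a flow map `𝒯`. -/
def IsMVSolution {d : ℕ} (Φ : ℝ → ℝ) (G : Euc d → Euc d) (F : ℝ → ℝ) (α : ℝ)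
    (I : Set ℝ) (f₀ : Measure (Phase d)) (f : ℝ → Measure (Phase d))
    (T : ℝ → Phase d → Phase d) : Prop :=
  (0 : ℝ) ∈ I ∧
  ContinuousOn (fun p : ℝ × Phase d => T p.1 p.2) (I ×ˢ Set.univ) ∧
  T 0 = id ∧
  (∀ t ∈ I, IsProbabilityMeasure (f t) ∧ ∃ K : Set (Phase d), IsCompact K ∧ f t Kᶜ = 0) ∧
  (∀ z₀ : Phase d, ∀ t ∈ I,
    HasDerivWithinAt (fun s => T s z₀)
      ((T t z₀).2, Hfield Φ G F α (f t) (T t z₀).1 (T t z₀).2) I t) ∧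
  (∀ t ∈ I, f t = f₀.map (T t))

/-- `π` is a coupling of `f` and `g`. -/
def IsCoupling {d : ℕ} (π : Measure (Phase d × Phase d)) (f g : Measure (Phase d)) : Prop :=
  π.map Prod.fst = f ∧ π.map Prod.snd = g

/-- The Monge–Kantorovich–Rubinstein distance W₁ (with the Euclidean cost on ℝ^{2d}). -/
noncomputable def W1 {d : ℕ} (f g : Measure (Phase d)) : ℝ :=
  sInf {c : ℝ | ∃ π : Measure (Phase d × Phase d), IsProbabilityMeasure π ∧ IsCoupling π f g ∧
    Integrable (fun p => pnorm (p.1 - p.2)) π ∧ c = ∫ p, pnorm (p.1 - p.2) ∂π}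

end


section auxlemmas
open MeasureTheory
open scoped RealInnerProductSpace

lemma integrable_of_cptK {X : Type*} [TopologicalSpace X] [MeasurableSpace X]
    [OpensMeasurableSpace X] [SecondCountableTopology X] {E : Type*} [NormedAddCommGroup E]
    {μ : Measure X} [IsFiniteMeasure μ] {K : Set X} (hK : IsCompact K) (hμK : μ Kᶜ = 0)
    {g : X → E} (hg : Continuous g) : Integrable g μ := by
  obtain ⟨C, hC⟩ := hK.exists_bound_of_continuousOn hg.continuousOn
  refine ⟨hg.aestronglyMeasurable, HasFiniteIntegral.of_bounded (C := C) ?_⟩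
  rw [ae_iff]
  refine measure_mono_null (fun x hx => ?_) hμK
  simp only [Set.mem_setOf_eq] at hx
  exact fun hxK => hx (hC x hxK)

lemma prod_compl_null {X : Type*} [MeasurableSpace X] (μ : Measure X) [SFinite μ]
    {K : Set X} (hμK : μ Kᶜ = 0) : (μ.prod μ) ((K ×ˢ K)ᶜ) = 0 := by
  have hsub : (K ×ˢ K)ᶜ ⊆ (Kᶜ ×ˢ (Set.univ : Set X)) ∪ ((Set.univ : Set X) ×ˢ Kᶜ) := by
    intro p hp
    simp only [Set.mem_compl_iff, Set.mem_prod, not_and] at hp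
    by_cases h1 : p.1 ∈ K
    · exact Or.inr ⟨Set.mem_univ _, hp h1⟩
    · exact Or.inl ⟨h1, Set.mem_univ _⟩
  refine measure_mono_null hsub (measure_union_null ?_ ?_) <;>
    simp [Measure.prod_prod, hμK]

lemma integral_swap_neg_zero {d : ℕ} (μ : Measure (Phase d)) [IsProbabilityMeasure μ]
    (h : Phase d × Phase d → ℝ) (hanti : ∀ p : Phase d × Phase d, h (p.2, p.1) = - h p) :
    ∫ p, h p ∂(μ.prod μ) = 0 := by
  have hs := integral_prod_swap (μ := μ) (ν := μ) h
  have h2 : ∫ p, h p.swap ∂(μ.prod μ) = ∫ p, - h p ∂(μ.prod μ) := by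
    congr 1
    funext p
    exact hanti p
  rw [h2, integral_neg] at hs
  linarith

lemma integral_inner_H {d : ℕ} (Φ : ℝ → ℝ) (G : Euc d → Euc d) (F : ℝ → ℝ) (α : ℝ)
    (hΦc : Continuous Φ) (hGc : Continuous G) (hFc : Continuous F)
    (μ : Measure (Phase d)) [IsProbabilityMeasure μ]
    {K : Set (Phase d)} (hK : IsCompact K) (hμK : μ Kᶜ = 0)
    (e : Phase d → Euc d) (he : Continuous e) :
    ∫ z, ⟪e z, Hfield Φ G F α μ z.1 z.2⟫ ∂μ
      = -(∫ p, ⟪e p.1, Φ ‖p.1.1 - p.2.1‖ • G (p.1.2 - p.2.2)⟫ ∂(μ.prod μ))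
        + velFluc μ ^ ((2 * α - 1) / 2) *
          ∫ p, ⟪e p.1, F (‖p.1.1 - p.2.1‖ ^ 2) • (p.1.1 - p.2.1)⟫ ∂(μ.prod μ) := by
  set c := velFluc μ ^ ((2 * α - 1) / 2) with hc
  set h₁ : Phase d × Phase d → ℝ :=
    fun p => ⟪e p.1, Φ ‖p.1.1 - p.2.1‖ • G (p.1.2 - p.2.2)⟫ with hh₁
  set h₂ : Phase d × Phase d → ℝ :=
    fun p => ⟪e p.1, F (‖p.1.1 - p.2.1‖ ^ 2) • (p.1.1 - p.2.1)⟫ with hh₂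
  have ch₁ : Continuous h₁ := by
    apply Continuous.inner (he.comp continuous_fst)
    exact ((hΦc.comp (continuous_fst.fst.sub continuous_snd.fst).norm).smul
      (hGc.comp (continuous_fst.snd.sub continuous_snd.snd)))
  have ch₂ : Continuous h₂ := by
    apply Continuous.inner (he.comp continuous_fst)
    exact ((hFc.comp ((continuous_fst.fst.sub continuous_snd.fst).norm.pow 2)).smul
      (continuous_fst.fst.sub continuous_snd.fst))
  haveI : OpensMeasurableSpace (Phase d × Phase d) := Prod.opensMeasurableSpace
  have ih₁ : Integrable h₁ (μ.prod μ) :=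
    integrable_of_cptK (hK.prod hK) (prod_compl_null μ hμK) ch₁
  have ih₂ : Integrable h₂ (μ.prod μ) :=
    integrable_of_cptK (hK.prod hK) (prod_compl_null μ hμK) ch₂
  have hpt : ∀ z : Phase d, ⟪e z, Hfield Φ G F α μ z.1 z.2⟫
      = -(∫ w, h₁ (z, w) ∂μ) + c * ∫ w, h₂ (z, w) ∂μ := by
    intro z
    have iA : Integrable (fun w : Phase d => Φ ‖z.1 - w.1‖ • G (z.2 - w.2)) μ :=
      integrable_of_cptK hK hμK
        ((hΦc.comp (continuous_const.sub continuous_fst).norm).smul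
          (hGc.comp (continuous_const.sub continuous_snd)))
    have iB : Integrable (fun w : Phase d => F (‖z.1 - w.1‖ ^ 2) • (z.1 - w.1)) μ :=
      integrable_of_cptK hK hμK
        ((hFc.comp ((continuous_const.sub continuous_fst).norm.pow 2)).smul
          (continuous_const.sub continuous_fst))
    rw [Hfield, inner_add_right, inner_neg_right, real_inner_smul_right,
      ← integral_inner iA (e z), ← integral_inner iB (e z)]
  calc ∫ z, ⟪e z, Hfield Φ G F α μ z.1 z.2⟫ ∂μ
      = ∫ z, (-(∫ w, h₁ (z, w) ∂μ) + c * ∫ w, h₂ (z, w) ∂μ) ∂μ := by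
        exact integral_congr_ae (Filter.Eventually.of_forall hpt)
    _ = -(∫ z, ∫ w, h₁ (z, w) ∂μ ∂μ) + c * ∫ z, ∫ w, h₂ (z, w) ∂μ ∂μ := by
        rw [integral_add (ih₁.integral_prod_left.neg') (ih₂.integral_prod_left.const_mul c),
          integral_neg, integral_const_mul]
    _ = -(∫ p, h₁ p ∂(μ.prod μ)) + c * ∫ p, h₂ p ∂(μ.prod μ) := by
        rw [integral_integral ih₁, integral_integral ih₂]
  done
set_option maxHeartbeats 1000000 in
/-- differential inequality for the velocity fluctuation 𝒢[f_t]. -/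
theorem stmt6 {d : ℕ} (hd : 1 ≤ d) (Φ F : ℝ → ℝ) (G : Euc d → Euc d) (α : ℝ)
    (hΦc : Continuous Φ) (hGc : Continuous G) (hFc : Continuous F)
    (hα : 1 ≤ α ∧ α < 3 / 2)
    (Gs Φs Fs : ℝ) (hGs : 0 < Gs) (hΦs : 0 < Φs)
    (hGodd : ∀ v : Euc d, G (-v) = -G v)
    (hGcoer : ∀ v : Euc d, Gs * ‖v‖ ^ (2 * α) ≤ ⟪G v, v⟫)
    (hΦlow : ∀ x : Euc d, Φs ≤ Φ ‖x‖)
    (hFbd : ∀ x : Euc d, ‖F (‖x‖ ^ 2) • x‖ ≤ Fs)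
    (hFs : Fs < (2 : ℝ) ^ (α - 1 / 2) * Φs * Gs)
    (T : ℝ) (hT : 0 < T)
    (f : ℝ → Measure (Phase d))
    (hsol : IsWeakSolution Φ G F α (Set.Ico 0 T) f) :
    ∀ t ∈ Set.Ico (0 : ℝ) T,
      velFluc (f t) = (∫ z, ‖z.2 - ∫ w, w.2 ∂(f 0)‖ ^ 2 ∂(f t)) ∧
      ∃ D : ℝ, HasDerivWithinAt (fun s => velFluc (f s)) D (Set.Ico 0 T) t ∧
        D ≤ -((2 : ℝ) ^ α * Φs * Gs - Real.sqrt 2 * Fs) * velFluc (f t) ^ α := by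
  obtain ⟨hα1, hα2⟩ := hα
  obtain ⟨hreg, hweak⟩ := hsol
  have hT0 : (0:ℝ) ∈ Set.Ico (0:ℝ) T := ⟨le_refl 0, hT⟩
  have hFs0 : (0:ℝ) ≤ Fs := by simpa using hFbd 0
  -- integrability helpers
  have intR : ∀ s ∈ Set.Ico (0:ℝ) T, ∀ g : Phase d → ℝ, Continuous g → Integrable g (f s) := by
    intro s hs g hg
    obtain ⟨K, hK, hK0⟩ := (hreg s hs).2
    haveI := (hreg s hs).1
    exact integrable_of_cptK hK hK0 hg
  have intE : ∀ s ∈ Set.Ico (0:ℝ) T, ∀ g : Phase d → Euc d, Continuous g → Integrable g (f s) := by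
    intro s hs g hg
    obtain ⟨K, hK, hK0⟩ := (hreg s hs).2
    haveI := (hreg s hs).1
    exact integrable_of_cptK hK hK0 hg
  have intP : ∀ s ∈ Set.Ico (0:ℝ) T, ∀ g : Phase d × Phase d → ℝ, Continuous g →
      Integrable g ((f s).prod (f s)) := by
    intro s hs g hg
    obtain ⟨K, hK, hK0⟩ := (hreg s hs).2
    haveI := (hreg s hs).1
    haveI : OpensMeasurableSpace (Phase d × Phase d) := Prod.opensMeasurableSpace
    exact integrable_of_cptK (hK.prod hK) (prod_compl_null _ hK0) hg
  -- the integral of the inner product of any constant vector with the field vanishes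
  have hm0 : ∀ s ∈ Set.Ico (0:ℝ) T, ∀ u : Euc d,
      ∫ z, ⟪u, Hfield Φ G F α (f s) z.1 z.2⟫ ∂(f s) = 0 := by
    intro s hs u
    obtain ⟨K, hK, hK0⟩ := (hreg s hs).2
    haveI := (hreg s hs).1
    rw [integral_inner_H Φ G F α hΦc hGc hFc (f s) hK hK0 (fun _ => u) continuous_const]
    have z1 : ∫ p, ⟪(fun _ : Phase d => u) p.1, Φ ‖p.1.1 - p.2.1‖ • G (p.1.2 - p.2.2)⟫
        ∂((f s).prod (f s)) = 0 := by
      refine integral_swap_neg_zero (f s) _ (fun p => ?_)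
      show ⟪u, Φ ‖p.2.1 - p.1.1‖ • G (p.2.2 - p.1.2)⟫
        = -⟪u, Φ ‖p.1.1 - p.2.1‖ • G (p.1.2 - p.2.2)⟫
      rw [norm_sub_rev, show p.2.2 - p.1.2 = -(p.1.2 - p.2.2) from (neg_sub _ _).symm, hGodd,
        smul_neg, inner_neg_right]
    have z2 : ∫ p, ⟪(fun _ : Phase d => u) p.1, F (‖p.1.1 - p.2.1‖ ^ 2) • (p.1.1 - p.2.1)⟫
        ∂((f s).prod (f s)) = 0 := by
      refine integral_swap_neg_zero (f s) _ (fun p => ?_)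
      show ⟪u, F (‖p.2.1 - p.1.1‖ ^ 2) • (p.2.1 - p.1.1)⟫
        = -⟪u, F (‖p.1.1 - p.2.1‖ ^ 2) • (p.1.1 - p.2.1)⟫
      rw [norm_sub_rev, show p.2.1 - p.1.1 = -(p.1.1 - p.2.1) from (neg_sub _ _).symm,
        smul_neg, inner_neg_right]
    rw [z1, z2]
    ring
  -- conservation of momentum
  have hmc : ∀ t ∈ Set.Ico (0:ℝ) T, (∫ z, z.2 ∂(f t)) = ∫ z, z.2 ∂(f 0) := by
    intro t ht
    refine ext_inner_left ℝ (fun u => ?_)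
    set L : Phase d →L[ℝ] ℝ := (innerSL ℝ u).comp (ContinuousLinearMap.snd ℝ (Euc d) (Euc d))
      with hLdef
    have hLapp : ∀ z : Phase d, L z = ⟪u, z.2⟫ := fun z => rfl
    have hder : ∀ s ∈ Set.Ico (0:ℝ) T,
        HasDerivWithinAt (fun r => ∫ z, L z ∂(f r)) 0 (Set.Ico (0:ℝ) T) s := by
      intro s hs
      have h := hweak (⇑L) L.contDiff s hs
      have hz : (∫ z, fderiv ℝ (⇑L) z (z.2, Hfield Φ G F α (f s) z.1 z.2) ∂(f s)) = 0 := by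
        have heq : ∀ z : Phase d, fderiv ℝ (⇑L) z (z.2, Hfield Φ G F α (f s) z.1 z.2)
            = ⟪u, Hfield Φ G F α (f s) z.1 z.2⟫ := by
          intro z
          rw [ContinuousLinearMap.fderiv]
          rfl
        simp only [heq]
        exact hm0 s hs u
      rwa [hz] at h
    have key : (∫ z, L z ∂(f t)) = ∫ z, L z ∂(f 0) := by
      rcases eq_or_lt_of_le ht.1 with h0 | h0
      · rw [← h0]
      · have hIcc : Set.Icc (0:ℝ) t ⊆ Set.Ico (0:ℝ) T :=
          fun x hx => ⟨hx.1, lt_of_le_of_lt hx.2 ht.2⟩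
        have hcst := constant_of_derivWithin_zero (f := fun r => ∫ z, L z ∂(f r)) (a := 0) (b := t)
          (fun x hx => ((hder x (hIcc hx)).mono hIcc).differentiableWithinAt)
          (fun x hx => ((hder x (hIcc (Set.Ico_subset_Icc_self hx))).mono hIcc).derivWithin
            ((uniqueDiffOn_Icc h0) x (Set.Ico_subset_Icc_self hx)))
        exact hcst t (Set.mem_Icc.mpr ⟨ht.1, le_refl t⟩)
    have e1 : (∫ z, L z ∂(f t)) = ⟪u, ∫ z, z.2 ∂(f t)⟫ := by
      rw [← integral_inner (intE t ht _ continuous_snd) u]; rfl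
    have e2 : (∫ z, L z ∂(f 0)) = ⟪u, ∫ z, z.2 ∂(f 0)⟫ := by
      rw [← integral_inner (intE 0 hT0 _ continuous_snd) u]; rfl
    rw [← e1, ← e2, key]
  -- first claim
  have claim1 : ∀ t ∈ Set.Ico (0:ℝ) T,
      velFluc (f t) = ∫ z, ‖z.2 - ∫ w, w.2 ∂(f 0)‖ ^ 2 ∂(f t) := by
    intro t ht
    haveI := (hreg t ht).1
    have hint2 : Integrable (fun z : Phase d => ‖z.2‖ ^ 2) (f t) :=
      intR t ht _ (continuous_snd.norm.pow 2)
    have hintI : Integrable (fun z : Phase d => 2 * ⟪z.2, ∫ w, w.2 ∂(f 0)⟫) (f t) :=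
      (intR t ht _ (continuous_snd.inner continuous_const)).const_mul 2
    have hexp : ∀ z : Phase d, ‖z.2 - ∫ w, w.2 ∂(f 0)‖ ^ 2
        = ‖z.2‖ ^ 2 - 2 * ⟪z.2, ∫ w, w.2 ∂(f 0)⟫ + ‖∫ w, w.2 ∂(f 0)‖ ^ 2 :=
      fun z => norm_sub_sq_real _ _
    have hI : ∫ z, ⟪z.2, ∫ w, w.2 ∂(f 0)⟫ ∂(f t) = ‖∫ w, w.2 ∂(f 0)‖ ^ 2 := by
      have hcomm : ∀ z : Phase d, ⟪z.2, ∫ w, w.2 ∂(f 0)⟫ = ⟪∫ w, w.2 ∂(f 0), z.2⟫ :=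
        fun z => real_inner_comm _ _
      simp only [hcomm]
      rw [integral_inner (intE t ht _ continuous_snd), hmc t ht, real_inner_self_eq_norm_sq]
    simp only [hexp]
    have hsub : Integrable (fun z : Phase d => ‖z.2‖ ^ 2 - 2 * ⟪z.2, ∫ w, w.2 ∂(f 0)⟫) (f t) :=
      hint2.sub hintI
    rw [integral_add hsub (integrable_const _), integral_sub hint2 hintI,
      integral_const_mul, hI, integral_const]
    simp only [probReal_univ, one_smul]
    unfold velFluc
    rw [hmc t ht]
    ring
  -- derivative of the squared norm test function
  have hfder : ∀ z q : Phase d, fderiv ℝ (fun z : Phase d => ‖z.2‖ ^ 2) z q = 2 * ⟪z.2, q.2⟫ := by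
    intro z q
    have h2 : (fun z : Phase d => ‖z.2‖ ^ 2) = fun z : Phase d => (⟪z.2, z.2⟫ : ℝ) := by
      funext y
      rw [real_inner_self_eq_norm_sq]
    have h1 : HasFDerivAt (fun z : Phase d => (⟪z.2, z.2⟫ : ℝ))
        ((fderivInnerCLM ℝ (z.2, z.2)).comp
          ((ContinuousLinearMap.snd ℝ (Euc d) (Euc d)).prod
            (ContinuousLinearMap.snd ℝ (Euc d) (Euc d)))) z :=
      HasFDerivAt.inner (𝕜 := ℝ) hasFDerivAt_snd hasFDerivAt_snd
    rw [h2, h1.fderiv]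
    simp only [ContinuousLinearMap.comp_apply, ContinuousLinearMap.prod_apply,
      ContinuousLinearMap.coe_snd', fderivInnerCLM_apply]
    rw [real_inner_comm q.2 z.2]
    ring
  -- main conclusion
  intro t ht
  haveI := (hreg t ht).1
  obtain ⟨K, hK, hK0⟩ := (hreg t ht).2
  haveI : OpensMeasurableSpace (Phase d × Phase d) := Prod.opensMeasurableSpace
  refine ⟨claim1 t ht, ?_⟩
  have hGnn : 0 ≤ velFluc (f t) := by
    rw [claim1 t ht]
    exact integral_nonneg fun z => sq_nonneg _
  have hcnn : 0 ≤ velFluc (f t) ^ ((2 * α - 1) / 2) := Real.rpow_nonneg hGnn _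
  have hDval := hweak (fun z : Phase d => ‖z.2‖ ^ 2) ((contDiff_norm_sq ℝ).comp contDiff_snd) t ht
  have hDeq : (∫ z, fderiv ℝ (fun z : Phase d => ‖z.2‖ ^ 2) z
        (z.2, Hfield Φ G F α (f t) z.1 z.2) ∂(f t))
      = ∫ z, 2 * ⟪z.2, Hfield Φ G F α (f t) z.1 z.2⟫ ∂(f t) := by
    congr 1
    funext z
    exact hfder z _
  rw [hDeq] at hDval
  refine ⟨∫ z, 2 * ⟪z.2, Hfield Φ G F α (f t) z.1 z.2⟫ ∂(f t), ?_, ?_⟩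
  · have h1 : HasDerivWithinAt
        (fun s => (∫ z, ‖z.2‖ ^ 2 ∂(f s)) - ‖∫ w, w.2 ∂(f 0)‖ ^ 2)
        (∫ z, 2 * ⟪z.2, Hfield Φ G F α (f t) z.1 z.2⟫ ∂(f t)) (Set.Ico 0 T) t :=
      hDval.sub_const _
    refine h1.congr (fun s hs => ?_) ?_
    · show velFluc (f s) = _
      unfold velFluc
      rw [hmc s hs]
    · show velFluc (f t) = _
      unfold velFluc
      rw [hmc t ht]
  · -- the estimate
    have key := integral_inner_H Φ G F α hΦc hGc hFc (f t) hK hK0 (fun z => z.2) continuous_snd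
    have cg₁ : Continuous (fun p : Phase d × Phase d =>
        (⟪p.1.2, Φ ‖p.1.1 - p.2.1‖ • G (p.1.2 - p.2.2)⟫ : ℝ)) :=
      (continuous_fst.snd).inner ((hΦc.comp (continuous_fst.fst.sub continuous_snd.fst).norm).smul
        (hGc.comp (continuous_fst.snd.sub continuous_snd.snd)))
    have cg₂ : Continuous (fun p : Phase d × Phase d =>
        (⟪p.1.2, F (‖p.1.1 - p.2.1‖ ^ 2) • (p.1.1 - p.2.1)⟫ : ℝ)) :=
      (continuous_fst.snd).inner
        ((hFc.comp ((continuous_fst.fst.sub continuous_snd.fst).norm.pow 2)).smul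
          (continuous_fst.fst.sub continuous_snd.fst))
    have cq₁ : Continuous (fun p : Phase d × Phase d =>
        (⟪p.1.2 - p.2.2, Φ ‖p.1.1 - p.2.1‖ • G (p.1.2 - p.2.2)⟫ : ℝ)) :=
      (continuous_fst.snd.sub continuous_snd.snd).inner
        ((hΦc.comp (continuous_fst.fst.sub continuous_snd.fst).norm).smul
          (hGc.comp (continuous_fst.snd.sub continuous_snd.snd)))
    have cq₂ : Continuous (fun p : Phase d × Phase d =>
        (⟪p.1.2 - p.2.2, F (‖p.1.1 - p.2.1‖ ^ 2) • (p.1.1 - p.2.1)⟫ : ℝ)) :=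
      (continuous_fst.snd.sub continuous_snd.snd).inner
        ((hFc.comp ((continuous_fst.fst.sub continuous_snd.fst).norm.pow 2)).smul
          (continuous_fst.fst.sub continuous_snd.fst))
    have cn1 : Continuous (fun p : Phase d × Phase d => ‖p.1.2 - p.2.2‖) :=
      (continuous_fst.snd.sub continuous_snd.snd).norm
    -- symmetrization for the alignment term
    have hsym1 : 2 * (∫ p, ⟪p.1.2, Φ ‖p.1.1 - p.2.1‖ • G (p.1.2 - p.2.2)⟫ ∂((f t).prod (f t)))
        = ∫ p, ⟪p.1.2 - p.2.2, Φ ‖p.1.1 - p.2.1‖ • G (p.1.2 - p.2.2)⟫ ∂((f t).prod (f t)) := by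
      have cswap : Continuous (fun p : Phase d × Phase d =>
          (⟪p.2.2, Φ ‖p.2.1 - p.1.1‖ • G (p.2.2 - p.1.2)⟫ : ℝ)) :=
          (continuous_snd.snd).inner ((hΦc.comp (continuous_snd.fst.sub continuous_fst.fst).norm).smul
            (hGc.comp (continuous_snd.snd.sub continuous_fst.snd)))
      have hswap' : ∫ p, (⟪p.2.2, Φ ‖p.2.1 - p.1.1‖ • G (p.2.2 - p.1.2)⟫ : ℝ) ∂((f t).prod (f t))
          = ∫ p, (⟪p.1.2, Φ ‖p.1.1 - p.2.1‖ • G (p.1.2 - p.2.2)⟫ : ℝ) ∂((f t).prod (f t)) :=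
        integral_prod_swap (fun p : Phase d × Phase d =>
          (⟪p.1.2, Φ ‖p.1.1 - p.2.1‖ • G (p.1.2 - p.2.2)⟫ : ℝ))
      have hadd : ∫ p, ((⟪p.1.2, Φ ‖p.1.1 - p.2.1‖ • G (p.1.2 - p.2.2)⟫ : ℝ)
            + (⟪p.2.2, Φ ‖p.2.1 - p.1.1‖ • G (p.2.2 - p.1.2)⟫ : ℝ)) ∂((f t).prod (f t))
          = ∫ p, (⟪p.1.2 - p.2.2, Φ ‖p.1.1 - p.2.1‖ • G (p.1.2 - p.2.2)⟫ : ℝ)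
              ∂((f t).prod (f t)) := by
        congr 1
        funext p
        rw [norm_sub_rev p.2.1, show p.2.2 - p.1.2 = -(p.1.2 - p.2.2) from (neg_sub _ _).symm,
          hGodd, smul_neg, inner_neg_right, inner_sub_left]
        ring
      rw [integral_add (intP t ht _ cg₁) (intP t ht _ cswap), hswap'] at hadd
      linarith
    -- symmetrization for the force term
    have hsym2 : 2 * (∫ p, ⟪p.1.2, F (‖p.1.1 - p.2.1‖ ^ 2) • (p.1.1 - p.2.1)⟫ ∂((f t).prod (f t)))
        = ∫ p, ⟪p.1.2 - p.2.2, F (‖p.1.1 - p.2.1‖ ^ 2) • (p.1.1 - p.2.1)⟫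
            ∂((f t).prod (f t)) := by
      have cswap : Continuous (fun p : Phase d × Phase d =>
          (⟪p.2.2, F (‖p.2.1 - p.1.1‖ ^ 2) • (p.2.1 - p.1.1)⟫ : ℝ)) :=
          (continuous_snd.snd).inner
            ((hFc.comp ((continuous_snd.fst.sub continuous_fst.fst).norm.pow 2)).smul
              (continuous_snd.fst.sub continuous_fst.fst))
      have hswap' : ∫ p, (⟪p.2.2, F (‖p.2.1 - p.1.1‖ ^ 2) • (p.2.1 - p.1.1)⟫ : ℝ)
            ∂((f t).prod (f t))
          = ∫ p, (⟪p.1.2, F (‖p.1.1 - p.2.1‖ ^ 2) • (p.1.1 - p.2.1)⟫ : ℝ) ∂((f t).prod (f t)) :=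
        integral_prod_swap (fun p : Phase d × Phase d =>
          (⟪p.1.2, F (‖p.1.1 - p.2.1‖ ^ 2) • (p.1.1 - p.2.1)⟫ : ℝ))
      have hadd : ∫ p, ((⟪p.1.2, F (‖p.1.1 - p.2.1‖ ^ 2) • (p.1.1 - p.2.1)⟫ : ℝ)
            + (⟪p.2.2, F (‖p.2.1 - p.1.1‖ ^ 2) • (p.2.1 - p.1.1)⟫ : ℝ)) ∂((f t).prod (f t))
          = ∫ p, (⟪p.1.2 - p.2.2, F (‖p.1.1 - p.2.1‖ ^ 2) • (p.1.1 - p.2.1)⟫ : ℝ)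
              ∂((f t).prod (f t)) := by
        congr 1
        funext p
        rw [norm_sub_rev p.2.1, show p.2.1 - p.1.1 = -(p.1.1 - p.2.1) from (neg_sub _ _).symm,
          smul_neg, inner_neg_right, inner_sub_left]
        ring
      rw [integral_add (intP t ht _ cg₂) (intP t ht _ cswap), hswap'] at hadd
      linarith
    -- the second moment of velocity differences
    have hvint : Integrable (fun z : Phase d => z.2) (f t) := intE t ht _ continuous_snd
    have J0 : ∫ p, ‖p.1.2 - p.2.2‖ ^ 2 ∂((f t).prod (f t)) = 2 * velFluc (f t) := by
      have hexp : ∀ p : Phase d × Phase d,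
          ‖p.1.2 - p.2.2‖ ^ 2 = ‖p.1.2‖ ^ 2 - 2 * ⟪p.1.2, p.2.2⟫ + ‖p.2.2‖ ^ 2 :=
        fun p => norm_sub_sq_real _ _
      have i1 : Integrable (fun p : Phase d × Phase d => ‖p.1.2‖ ^ 2) ((f t).prod (f t)) :=
        intP t ht _ (continuous_fst.snd.norm.pow 2)
      have iinner : Integrable (fun p : Phase d × Phase d => (⟪p.1.2, p.2.2⟫ : ℝ))
          ((f t).prod (f t)) := intP t ht _ ((continuous_fst.snd).inner (continuous_snd.snd))
      have i2 : Integrable (fun p : Phase d × Phase d => 2 * (⟪p.1.2, p.2.2⟫ : ℝ))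
          ((f t).prod (f t)) := iinner.const_mul 2
      have i3 : Integrable (fun p : Phase d × Phase d => ‖p.2.2‖ ^ 2) ((f t).prod (f t)) :=
        intP t ht _ (continuous_snd.snd.norm.pow 2)
      have e1 : ∫ p, ‖p.1.2‖ ^ 2 ∂((f t).prod (f t)) = ∫ z, ‖z.2‖ ^ 2 ∂(f t) := by
        rw [integral_prod _ i1]
        simp [integral_const, measure_univ]
      have e3 : ∫ p, ‖p.2.2‖ ^ 2 ∂((f t).prod (f t)) = ∫ z, ‖z.2‖ ^ 2 ∂(f t) := by
        rw [integral_prod _ i3]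
        simp [integral_const, measure_univ]
      have e2 : ∫ p, (⟪p.1.2, p.2.2⟫ : ℝ) ∂((f t).prod (f t)) = ‖∫ z, z.2 ∂(f t)‖ ^ 2 := by
        rw [integral_prod _ iinner]
        have einner : ∀ x : Phase d, ∫ y, (⟪x.2, y.2⟫ : ℝ) ∂(f t)
            = ⟪∫ z, z.2 ∂(f t), x.2⟫ := by
          intro x
          rw [integral_inner hvint x.2]
          exact real_inner_comm _ _
        simp only [einner]
        rw [integral_inner hvint, real_inner_self_eq_norm_sq]
      have hsub : Integrable (fun p : Phase d × Phase d =>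
          ‖p.1.2‖ ^ 2 - 2 * (⟪p.1.2, p.2.2⟫ : ℝ)) ((f t).prod (f t)) := i1.sub i2
      simp only [hexp]
      rw [integral_add hsub i3, integral_sub i1 i2, integral_const_mul, e1, e2, e3]
      unfold velFluc
      ring
    -- Jensen for the exponent α
    have hJ1 : (2 * velFluc (f t)) ^ α
        ≤ ∫ p, ‖p.1.2 - p.2.2‖ ^ (2 * α) ∂((f t).prod (f t)) := by
      have hconv : ConvexOn ℝ (Set.Ici 0) (fun x : ℝ => x ^ α) := convexOn_rpow hα1
      have hJ := hconv.map_average_le (μ := (f t).prod (f t))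
        (f := fun p : Phase d × Phase d => ‖p.1.2 - p.2.2‖ ^ 2)
        (Real.continuous_rpow_const (by linarith)).continuousOn
        isClosed_Ici
        (Filter.Eventually.of_forall fun p => Set.mem_Ici.mpr (sq_nonneg _))
        (intP t ht _ ((continuous_fst.snd.sub continuous_snd.snd).norm.pow 2))
        (intP t ht _ ((Real.continuous_rpow_const (by linarith)).comp
          ((continuous_fst.snd.sub continuous_snd.snd).norm.pow 2)))
      rw [average_eq_integral, average_eq_integral, J0] at hJ
      calc (2 * velFluc (f t)) ^ α
          ≤ ∫ p, (‖p.1.2 - p.2.2‖ ^ 2) ^ α ∂((f t).prod (f t)) := hJ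
        _ = ∫ p, ‖p.1.2 - p.2.2‖ ^ (2 * α) ∂((f t).prod (f t)) := by
            congr 1
            funext p
            rw [← Real.rpow_natCast ‖p.1.2 - p.2.2‖ 2, ← Real.rpow_mul (norm_nonneg _)]
            norm_num
    -- Cauchy-Schwarz type bound for the first moment
    have intn1 : Integrable (fun p : Phase d × Phase d => ‖p.1.2 - p.2.2‖) ((f t).prod (f t)) :=
      intP t ht _ cn1
    have hn1nn : 0 ≤ ∫ p, ‖p.1.2 - p.2.2‖ ∂((f t).prod (f t)) :=
      integral_nonneg fun p => norm_nonneg _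
    have hJ2 : ∫ p, ‖p.1.2 - p.2.2‖ ∂((f t).prod (f t))
        ≤ Real.sqrt (2 * velFluc (f t)) := by
      have hconv : ConvexOn ℝ (Set.Ici 0) (fun x : ℝ => x ^ (2 : ℕ)) := convexOn_pow 2
      have hJ := hconv.map_average_le (μ := (f t).prod (f t))
        (f := fun p : Phase d × Phase d => ‖p.1.2 - p.2.2‖)
        (continuous_pow 2).continuousOn isClosed_Ici
        (Filter.Eventually.of_forall fun p => Set.mem_Ici.mpr (norm_nonneg _))
        intn1 (intP t ht _ (cn1.pow 2))
      rw [average_eq_integral, average_eq_integral] at hJ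
      rw [J0] at hJ
      calc ∫ p, ‖p.1.2 - p.2.2‖ ∂((f t).prod (f t))
          = Real.sqrt ((∫ p, ‖p.1.2 - p.2.2‖ ∂((f t).prod (f t))) ^ 2) :=
            (Real.sqrt_sq hn1nn).symm
        _ ≤ Real.sqrt (2 * velFluc (f t)) := Real.sqrt_le_sqrt hJ
    -- lower bound for the alignment term
    have hq1 : Φs * Gs * (2 * velFluc (f t)) ^ α
        ≤ ∫ p, ⟪p.1.2 - p.2.2, Φ ‖p.1.1 - p.2.1‖ • G (p.1.2 - p.2.2)⟫ ∂((f t).prod (f t)) := by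
      have cnorm2α : Continuous (fun p : Phase d × Phase d => ‖p.1.2 - p.2.2‖ ^ (2 * α)) :=
        (Real.continuous_rpow_const (by linarith)).comp cn1
      have hq1pt : ∀ p : Phase d × Phase d,
          Φs * (Gs * ‖p.1.2 - p.2.2‖ ^ (2 * α))
            ≤ ⟪p.1.2 - p.2.2, Φ ‖p.1.1 - p.2.1‖ • G (p.1.2 - p.2.2)⟫ := by
        intro p
        rw [real_inner_smul_right, real_inner_comm]
        refine mul_le_mul (hΦlow _) (hGcoer _)
          (mul_nonneg hGs.le (Real.rpow_nonneg (norm_nonneg _) _))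
          (le_trans hΦs.le (hΦlow _))
      have h1 : ∫ p, Φs * (Gs * ‖p.1.2 - p.2.2‖ ^ (2 * α)) ∂((f t).prod (f t))
          ≤ ∫ p, ⟪p.1.2 - p.2.2, Φ ‖p.1.1 - p.2.1‖ • G (p.1.2 - p.2.2)⟫ ∂((f t).prod (f t)) :=
        integral_mono (((intP t ht _ cnorm2α).const_mul Gs).const_mul Φs)
          (intP t ht _ cq₁) hq1pt
      rw [integral_const_mul, integral_const_mul] at h1
      have h2 := mul_le_mul_of_nonneg_left (mul_le_mul_of_nonneg_left hJ1 hGs.le) hΦs.le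
      calc Φs * Gs * (2 * velFluc (f t)) ^ α
          = Φs * (Gs * (2 * velFluc (f t)) ^ α) := by ring
        _ ≤ Φs * (Gs * ∫ p, ‖p.1.2 - p.2.2‖ ^ (2 * α) ∂((f t).prod (f t))) := h2
        _ ≤ _ := h1
    -- upper bound for the force term
    have hq2 : ∫ p, ⟪p.1.2 - p.2.2, F (‖p.1.1 - p.2.1‖ ^ 2) • (p.1.1 - p.2.1)⟫
          ∂((f t).prod (f t))
        ≤ Fs * Real.sqrt (2 * velFluc (f t)) := by
      have hpt : ∀ p : Phase d × Phase d,
          ⟪p.1.2 - p.2.2, F (‖p.1.1 - p.2.1‖ ^ 2) • (p.1.1 - p.2.1)⟫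
            ≤ Fs * ‖p.1.2 - p.2.2‖ := by
        intro p
        calc ⟪p.1.2 - p.2.2, F (‖p.1.1 - p.2.1‖ ^ 2) • (p.1.1 - p.2.1)⟫
            ≤ ‖p.1.2 - p.2.2‖ * ‖F (‖p.1.1 - p.2.1‖ ^ 2) • (p.1.1 - p.2.1)‖ :=
              real_inner_le_norm _ _
          _ ≤ ‖p.1.2 - p.2.2‖ * Fs := mul_le_mul_of_nonneg_left (hFbd _) (norm_nonneg _)
          _ = Fs * ‖p.1.2 - p.2.2‖ := mul_comm _ _
      have h1 : ∫ p, ⟪p.1.2 - p.2.2, F (‖p.1.1 - p.2.1‖ ^ 2) • (p.1.1 - p.2.1)⟫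
            ∂((f t).prod (f t))
          ≤ ∫ p, Fs * ‖p.1.2 - p.2.2‖ ∂((f t).prod (f t)) :=
        integral_mono (intP t ht _ cq₂) (intn1.const_mul Fs) hpt
      rw [integral_const_mul] at h1
      exact le_trans h1 (mul_le_mul_of_nonneg_left hJ2 hFs0)
    -- assemble everything
    have hDsplit : ∫ z, 2 * ⟪z.2, Hfield Φ G F α (f t) z.1 z.2⟫ ∂(f t)
        = 2 * ∫ z, ⟪z.2, Hfield Φ G F α (f t) z.1 z.2⟫ ∂(f t) := integral_const_mul 2 _
    rw [hDsplit, key]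
    have e2' : velFluc (f t) ^ ((2 * α - 1) / 2) * Real.sqrt (2 * velFluc (f t))
        = Real.sqrt 2 * velFluc (f t) ^ α := by
      rw [Real.sqrt_mul (by norm_num : (0:ℝ) ≤ 2), Real.sqrt_eq_rpow (velFluc (f t))]
      have hsum : (2 * α - 1) / 2 + 1 / 2 = α := by ring
      have hmul : velFluc (f t) ^ ((2 * α - 1) / 2) * velFluc (f t) ^ (1 / (2:ℝ))
          = velFluc (f t) ^ α := by
        rw [← Real.rpow_add' hGnn (by rw [hsum]; linarith)]
        rw [hsum]
      calc velFluc (f t) ^ ((2 * α - 1) / 2) * (Real.sqrt 2 * velFluc (f t) ^ (1 / (2:ℝ)))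
          = Real.sqrt 2 * (velFluc (f t) ^ ((2 * α - 1) / 2) * velFluc (f t) ^ (1 / (2:ℝ))) := by
            ring
        _ = Real.sqrt 2 * velFluc (f t) ^ α := by rw [hmul]
    have e1' : (2 * velFluc (f t)) ^ α = 2 ^ α * velFluc (f t) ^ α :=
      Real.mul_rpow (by norm_num) hGnn
    have hq1' := hq1
    rw [e1'] at hq1'
    have hBc := mul_le_mul_of_nonneg_left hq2 hcnn
    have hBc' : velFluc (f t) ^ ((2 * α - 1) / 2) * (Fs * Real.sqrt (2 * velFluc (f t)))
        = Real.sqrt 2 * Fs * velFluc (f t) ^ α := by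
      calc velFluc (f t) ^ ((2 * α - 1) / 2) * (Fs * Real.sqrt (2 * velFluc (f t)))
          = Fs * (velFluc (f t) ^ ((2 * α - 1) / 2) * Real.sqrt (2 * velFluc (f t))) := by ring
        _ = Fs * (Real.sqrt 2 * velFluc (f t) ^ α) := by rw [e2']
        _ = Real.sqrt 2 * Fs * velFluc (f t) ^ α := by ring
    rw [hBc'] at hBc
    have hcg2 : velFluc (f t) ^ ((2 * α - 1) / 2)
          * ∫ p, ⟪p.1.2 - p.2.2, F (‖p.1.1 - p.2.1‖ ^ 2) • (p.1.1 - p.2.1)⟫ ∂((f t).prod (f t))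
        = 2 * (velFluc (f t) ^ ((2 * α - 1) / 2)
          * ∫ p, ⟪p.1.2, F (‖p.1.1 - p.2.1‖ ^ 2) • (p.1.1 - p.2.1)⟫ ∂((f t).prod (f t))) := by
      rw [← hsym2]
      ring
    nlinarith [hsym1, hq1', hBc, hcg2]
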